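/- Let 0 < V₁ < V₂ < ⋯ < V_m, let C > 0 and q > 0, and let g : {1, …, m} → ℝ be nonnegative and satisfy g(i) ≥ C/q + (1/V_i)·Σ_{j=2}^{i} g(j−1)·(V_j − V_{j−1}) for every i ∈ {1, …, m}. Then g(i) ≥ (C/q)·(1 + Σ_{j=2}^{i} (1 − V_{j−1}/V_j)) for every i ∈ {1, …, m}. Consequently, if g(m) ≤ C, then q ≥ 1 + Σ_{j=2}^{m} (1 − V_{j−1}/V_j). -/

import Mathlib

open Real Set Finset

theorem stmt_10 (m : ℕ) (hm : 1 ≤ m) (V : ℕ → ℝ)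
    (hVpos : ∀ i, 1 ≤ i → i ≤ m → 0 < V i)
    (hVmono : ∀ i, 1 ≤ i → i < m → V i < V (i + 1))
    (C q : ℝ) (hC : 0 < C) (hq : 0 < q)
    (g : ℕ → ℝ) (hg_nonneg : ∀ i, 1 ≤ i → i ≤ m → 0 ≤ g i)
    (hg_ineq : ∀ i, 1 ≤ i → i ≤ m →
      C / q + (1 / V i) * ∑ j ∈ Finset.Icc 2 i, g (j - 1) * (V j - V (j - 1)) ≤ g i) :
    (∀ i, 1 ≤ i → i ≤ m →
      (C / q) * (1 + ∑ j ∈ Finset.Icc 2 i, (1 - V (j - 1) / V j)) ≤ g i) ∧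
    (g m ≤ C → 1 + ∑ j ∈ Finset.Icc 2 m, (1 - V (j - 1) / V j) ≤ q) := by
  set S : ℕ → ℝ := fun i => ∑ j ∈ Finset.Icc 2 i, (1 - V (j - 1) / V j) with hS
  -- identity: ∑_{j=2}^i (1 + S (j-1)) * (V j - V (j-1)) = V i * S i
  have hident : ∀ i, 1 ≤ i → i ≤ m →
      ∑ j ∈ Finset.Icc 2 i, (1 + S (j - 1)) * (V j - V (j - 1)) = V i * S i := by
    intro i hi him
    induction i, hi using Nat.le_induction with
    | base => simp [hS]
    | succ n hn ih =>
      have hnm : n ≤ m := le_of_lt (Nat.lt_of_succ_le him)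
      have ihn := ih hnm
      have h2 : 2 ≤ n + 1 := by omega
      rw [Finset.sum_Icc_succ_top h2, ihn, hS]
      simp only
      rw [Finset.sum_Icc_succ_top h2]
      have hn1 : n + 1 - 1 = n := by omega
      rw [hn1]
      have hVn1 : 0 < V (n + 1) := hVpos (n + 1) (by omega) him
      field_simp
      ring
  have key : ∀ i, 1 ≤ i → i ≤ m → (C / q) * (1 + S i) ≤ g i := by
    intro i
    induction i using Nat.strong_induction_on with
    | _ i ih =>
      intro hi him
      have hVi : 0 < V i := hVpos i hi him
      have hsum : (C / q) * (V i * S i) ≤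
          ∑ j ∈ Finset.Icc 2 i, g (j - 1) * (V j - V (j - 1)) := by
        rw [← hident i hi him, Finset.mul_sum]
        apply Finset.sum_le_sum
        intro j hj
        rw [Finset.mem_Icc] at hj
        have hj1 : 1 ≤ j - 1 := by omega
        have hj1m : j - 1 ≤ m := by omega
        have hj1lt : j - 1 < i := by omega
        have hVj : V (j - 1) < V j := by
          have := hVmono (j - 1) hj1 (by omega)
          rwa [Nat.sub_add_cancel (by omega : 1 ≤ j)] at this
        have hg := ih (j - 1) hj1lt hj1 hj1m
        rw [← mul_assoc]
        exact mul_le_mul_of_nonneg_right hg (by linarith)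
      have hmain := hg_ineq i hi him
      have hdiv : (C / q) * S i ≤
          (1 / V i) * ∑ j ∈ Finset.Icc 2 i, g (j - 1) * (V j - V (j - 1)) := by
        rw [← sub_nonneg] at hsum ⊢
        have : (1 / V i) * ∑ j ∈ Finset.Icc 2 i, g (j - 1) * (V j - V (j - 1)) -
            (C / q) * S i = (1 / V i) *
            ((∑ j ∈ Finset.Icc 2 i, g (j - 1) * (V j - V (j - 1))) -
              (C / q) * (V i * S i)) := by
          field_simp
        rw [this]
        positivity
      linarith [hmain]
  refine ⟨fun i hi him => key i hi him, fun hgm => ?_⟩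
  have h1 := key m hm le_rfl
  have h2 : (C / q) * (1 + S m) ≤ C := le_trans h1 hgm
  rw [div_mul_eq_mul_div, div_le_iff₀ hq] at h2
  nlinarith
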